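/- Let (X,T) be an invertible dynamical system, x ∈ X, and let Y be the closure of the forward orbit {T^n x : n ∈ ℤ₊}. Then x is 𝒥-recurrent (i.e., N(x,U) = {n ∈ ℕ : T^n x ∈ U} is a J-set for every open neighborhood U of x) if and only if for every m ∈ ℕ, every sequence s : ℕ → ℤ^m, and every nonempty relatively open subset U of Y there exist a nonempty finite set α ⊆ ℕ and a point z ∈ Y such that T^{s_α(i)} z ∈ U for every i ∈ {1,…,m}. -/

import Mathlib

open Finset

/-- `F ⊆ ℕ₊` is a J-set: for every `m ∈ ℕ` and every sequence `s : ℕ₊ → ℤ^m`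
there exist `r ∈ ℕ₊` and a nonempty finite `α ⊆ ℕ₊` such that
`r + s_α i ∈ F` for every `i ∈ {1,…,m}`, where `s_α = ∑_{n∈α} s n`. -/
def IsJSet (F : Set ℕ+) : Prop :=
  ∀ (m : ℕ) (s : ℕ+ → Fin m → ℤ),
    ∃ (r : ℕ+) (α : Finset ℕ+), α.Nonempty ∧
      ∀ i : Fin m, ∃ k ∈ F, ((k : ℕ) : ℤ) = ((r : ℕ) : ℤ) + ∑ n ∈ α, s n i

private lemma pow_apply_eq_iterate' {X : Type*} [TopologicalSpace X] (T : X ≃ₜ X)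
    (n : ℕ) (y : X) : (T.toEquiv ^ n) y = T^[n] y := by
  induction n generalizing y with
  | zero => simp
  | succ k ih =>
    rw [pow_succ, Equiv.Perm.mul_apply, Function.iterate_succ_apply]
    exact ih (T y)

private lemma zpow_nat_apply {X : Type*} [TopologicalSpace X] (T : X ≃ₜ X)
    (n : ℕ) (y : X) : (T.toEquiv ^ (n : ℤ)) y = T^[n] y := by
  rw [zpow_natCast]; exact pow_apply_eq_iterate' T n y

private lemma zpow_continuous {X : Type*} [TopologicalSpace X] (T : X ≃ₜ X)
    (a : ℤ) : Continuous fun y => (T.toEquiv ^ a) y := by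
  obtain ⟨n, rfl | rfl⟩ := Int.eq_nat_or_neg a
  · have : (fun y => (T.toEquiv ^ (n : ℤ)) y) = T^[n] := by
      funext y; exact zpow_nat_apply T n y
    rw [this]; exact T.continuous.iterate n
  · have h : (fun y => (T.toEquiv ^ (-(n : ℤ))) y) = T.symm^[n] := by
      funext y
      rw [zpow_neg, zpow_natCast, ← inv_pow]
      have h2 : T.toEquiv⁻¹ = T.symm.toEquiv := rfl
      rw [h2]
      exact pow_apply_eq_iterate' T.symm n y
    rw [h]; exact T.symm.continuous.iterate n

private lemma toNat_pos {a : ℤ} (h : 1 ≤ a) : 0 < a.toNat := by omega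

/-- Let `(X, T)` be an invertible dynamical system, `x ∈ X`, and `Y` the closure of the
forward orbit of `x`. Then `x` is 𝒥-recurrent (`N(x, U)` is a J-set for every open
neighborhood `U` of `x`) iff for every `m`, every sequence `s : ℕ₊ → ℤ^m` and every
nonempty relatively open subset `V ∩ Y` of `Y` there exist a nonempty finite `α` and a
point `z ∈ Y` with `T^(s_α i) z ∈ V ∩ Y` for every `i`. -/
theorem jrecurrent_iff_multiple_ip_recurrence
    {X : Type*} [TopologicalSpace X] [CompactSpace X] [T2Space X] [Nonempty X]
    (T : X ≃ₜ X) (x : X) (Y : Set X)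
    (hY : Y = closure (Set.range fun n : ℕ => T^[n] x)) :
    (∀ U : Set X, IsOpen U → x ∈ U → IsJSet {n : ℕ+ | T^[(n : ℕ)] x ∈ U}) ↔
      (∀ (m : ℕ) (s : ℕ+ → Fin m → ℤ) (V : Set X), IsOpen V → (V ∩ Y).Nonempty →
        ∃ α : Finset ℕ+, α.Nonempty ∧ ∃ z ∈ Y,
          ∀ i : Fin m, (T.toEquiv ^ (∑ n ∈ α, s n i)) z ∈ V ∩ Y) := by
  have horb : ∀ n : ℕ, T^[n] x ∈ Y := by
    intro n; rw [hY]; exact subset_closure ⟨n, rfl⟩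
  constructor
  · -- forward
    intro hrec m s V hV hVY
    obtain ⟨y, hyV, hyY⟩ := hVY
    have hex : ∃ n0 : ℕ, T^[n0] x ∈ V := by
      rw [hY] at hyY
      obtain ⟨w, hwV, n0, hn0⟩ := mem_closure_iff.mp hyY V hV hyV
      have hn0' : T^[n0] x = w := hn0
      exact ⟨n0, hn0' ▸ hwV⟩
    obtain ⟨n0, hn0⟩ := hex
    set U : Set X := T^[n0] ⁻¹' V with hU
    have hUopen : IsOpen U := hV.preimage (T.continuous.iterate n0)
    have hxU : x ∈ U := hn0
    obtain ⟨r, α, hα, hiter⟩ := hrec U hUopen hxU m s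
    refine ⟨α, hα, T^[(r : ℕ) + n0] x, horb _, fun i => ?_⟩
    obtain ⟨k, hkF, hk⟩ := hiter i
    have key : (T.toEquiv ^ (∑ n ∈ α, s n i)) (T^[(r : ℕ) + n0] x)
        = T^[(k : ℕ) + n0] x := by
      have hE : (∑ n ∈ α, s n i) + (((r : ℕ) + n0 : ℕ) : ℤ)
          = (((k : ℕ) + n0 : ℕ) : ℤ) := by
        push_cast at hk ⊢
        linarith
      rw [← zpow_nat_apply T ((r : ℕ) + n0) x, ← Equiv.Perm.mul_apply, ← zpow_add,
        hE, zpow_nat_apply]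
    rw [key]
    constructor
    · have h2 : T^[(k : ℕ) + n0] x = T^[n0] (T^[(k : ℕ)] x) := by
        rw [add_comm, Function.iterate_add_apply]
      rw [h2]; exact hkF
    · exact horb _
  · -- backward
    intro hmult U hUopen hxU m s
    set c : ℕ+ → ℤ := fun n =>
      1 + ∑ j : Fin m, ∑ k ∈ Finset.Icc 1 n, |s k j| with hc
    set s' : ℕ+ → Fin m → ℤ := fun n i => s n i + c n with hs'
    have hxY : x ∈ Y := by simpa using horb 0
    obtain ⟨α, hα, z, hzY, hz⟩ := hmult m s' U hUopen ⟨x, hxU, hxY⟩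
    set C : ℤ := ∑ n ∈ α, c n with hC
    have hsum : ∀ i, ∑ n ∈ α, s' n i = (∑ n ∈ α, s n i) + C := by
      intro i; rw [hC, hs', ← Finset.sum_add_distrib]
    have hcpos : ∀ n : ℕ+, 1 ≤ c n := by
      intro n
      have h0 : 0 ≤ ∑ j : Fin m, ∑ k ∈ Finset.Icc 1 n, |s k j| :=
        Finset.sum_nonneg fun j _ => Finset.sum_nonneg fun k _ => abs_nonneg _
      show (1 : ℤ) ≤ 1 + ∑ j : Fin m, ∑ k ∈ Finset.Icc 1 n, |s k j|
      linarith
    have hCpos : 1 ≤ C := by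
      obtain ⟨M, hM⟩ := hα
      calc (1 : ℤ) ≤ c M := hcpos M
        _ ≤ C := Finset.single_le_sum (f := c)
            (fun n _ => le_trans zero_le_one (hcpos n)) hM
    have hCbig : ∀ i, 1 ≤ C + ∑ n ∈ α, s n i := by
      intro i
      set N := α.max' hα with hN
      have hNα : N ∈ α := α.max'_mem hα
      have h1 : c N ≤ C :=
        Finset.single_le_sum (f := c) (fun n _ => le_trans zero_le_one (hcpos n)) hNα
      have h2 : ∑ n ∈ α, |s n i| ≤ ∑ k ∈ Finset.Icc 1 N, |s k i| := by
        apply Finset.sum_le_sum_of_subset_of_nonneg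
        · intro n hn
          rw [Finset.mem_Icc]
          exact ⟨n.one_le, α.le_max' n hn⟩
        · intro k _ _; exact abs_nonneg _
      have h3 : ∑ k ∈ Finset.Icc 1 N, |s k i|
          ≤ ∑ j : Fin m, ∑ k ∈ Finset.Icc 1 N, |s k j| :=
        Finset.single_le_sum (f := fun j => ∑ k ∈ Finset.Icc 1 N, |s k j|)
          (fun j _ => Finset.sum_nonneg fun k _ => abs_nonneg _) (Finset.mem_univ i)
      have h4 : |∑ n ∈ α, s n i| ≤ ∑ n ∈ α, |s n i| := Finset.abs_sum_le_sum_abs _ _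
      have h5 : c N = 1 + ∑ j : Fin m, ∑ k ∈ Finset.Icc 1 N, |s k j| := rfl
      have h6 := (abs_le.mp (le_trans h4 (le_trans h2 h3))).1
      linarith
    set W : Set X := ⋂ i : Fin m,
      (fun y => (T.toEquiv ^ (∑ n ∈ α, s' n i)) y) ⁻¹' U with hW
    have hWopen : IsOpen W :=
      isOpen_iInter_of_finite fun i => hUopen.preimage (zpow_continuous T _)
    have hzW : z ∈ W := Set.mem_iInter.mpr fun i => (hz i).1
    have hzY' := hzY
    rw [hY] at hzY'
    obtain ⟨w, hwW, n, hn⟩ := mem_closure_iff.mp hzY' W hWopen hzW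
    have hn' : T^[n] x = w := hn
    have hwW' : T^[n] x ∈ W := hn' ▸ hwW
    have hnn : (0 : ℤ) ≤ (n : ℤ) := Int.natCast_nonneg n
    have hrpos : 1 ≤ (n : ℤ) + C := by linarith
    refine ⟨⟨((n : ℤ) + C).toNat, toNat_pos hrpos⟩, α, hα, fun i => ?_⟩
    have hki : 1 ≤ (n : ℤ) + ∑ j ∈ α, s' j i := by
      rw [hsum i]
      have := hCbig i
      linarith
    refine ⟨⟨((n : ℤ) + ∑ j ∈ α, s' j i).toNat, toNat_pos hki⟩, ?_, ?_⟩
    · show T^[((n : ℤ) + ∑ j ∈ α, s' j i).toNat] x ∈ U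
      have hwU : (T.toEquiv ^ (∑ j ∈ α, s' j i)) (T^[n] x) ∈ U :=
        Set.mem_iInter.mp hwW' i
      have key : (T.toEquiv ^ (∑ j ∈ α, s' j i)) (T^[n] x)
          = T^[((n : ℤ) + ∑ j ∈ α, s' j i).toNat] x := by
        have hE : (∑ j ∈ α, s' j i) + (n : ℤ)
            = ((((n : ℤ) + ∑ j ∈ α, s' j i).toNat : ℕ) : ℤ) := by
          rw [Int.toNat_of_nonneg (by linarith : (0:ℤ) ≤ (n : ℤ) + ∑ j ∈ α, s' j i)]
          ring
        rw [← zpow_nat_apply T n x, ← Equiv.Perm.mul_apply, ← zpow_add, hE,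
          zpow_nat_apply]
      rw [← key]; exact hwU
    · show ((((n : ℤ) + ∑ j ∈ α, s' j i).toNat : ℕ) : ℤ)
          = ((((n : ℤ) + C).toNat : ℕ) : ℤ) + ∑ j ∈ α, s j i
      rw [Int.toNat_of_nonneg (by linarith : (0:ℤ) ≤ (n : ℤ) + ∑ j ∈ α, s' j i),
        Int.toNat_of_nonneg (by linarith : (0:ℤ) ≤ (n : ℤ) + C), hsum i]
      ring
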